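/- With X*, Q*, gap_{ℓ,j}, δ_ℓ, n_ℓ as defined, for every even ℓ > 2: ∑_{j=0}^{n_ℓ−1} gap_{ℓ,j} ≥ δ_ℓ·ln(n_ℓ)/2. -/

import Mathlib

open scoped BigOperators ENNReal NNReal

noncomputable section

namespace Stmt15

/-- Valuation / allocation vectors over 2 items. -/
abbrev V2 := Fin 2 → ℝ

/-- Dot product. -/
def dot (x y : V2) : ℝ := ∑ t, x t * y t

/-- ℓ¹ norm. -/
def norm1 (x : V2) : ℝ := ∑ t, |x t|

/-- `n_ℓ := ℓ·⌈(ln ℓ)²⌉ + 1`. -/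
def nl (l : ℕ) : ℕ := l * ⌈(Real.log l) ^ 2⌉₊ + 1

/-- `θ_ℓ := π / (2(n_ℓ − 1))`. -/
def θ (l : ℕ) : ℝ := Real.pi / (2 * ((nl l : ℝ) - 1))

/-- `α := ∑_{m=2}^∞ 1/(m (ln m)²)`. -/
def α : ℝ := ∑' m : ℕ, if 2 ≤ m then 1 / (m * (Real.log m) ^ 2) else 0

/-- `δ_ℓ := 1/(α ℓ (ln ℓ)²)`. -/
def δ (l : ℕ) : ℝ := 1 / (α * l * (Real.log l) ^ 2)

/-- `cot x := cos x / sin x`. -/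
def cot (x : ℝ) : ℝ := Real.cos x / Real.sin x

/-- `z_ℓ := ∑_{m=2}^ℓ δ_m`. -/
def zl (l : ℕ) : ℝ := ∑ m ∈ Finset.Icc 2 l, δ m

/-- `z_{ℓ,j} := 1 − δ_ℓ·cot((j+1)θ_ℓ)` for `j ≤ n_ℓ − 2`, and `z_{ℓ,n_ℓ−1} := 1`. -/
def zlj (l j : ℕ) : ℝ :=
  if j = nl l - 1 then 1 else 1 - δ l * cot (((j : ℝ) + 1) * θ l)

/-- The point `x_{ℓ,j}` of the layered construction. -/
def xstar (p : ℕ × ℕ) : V2 :=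
  if Even p.1 then ![Real.cos (p.2 * θ p.1), Real.sin (p.2 * θ p.1)]
  else ![Real.sin (p.2 * θ p.1), Real.cos (p.2 * θ p.1)]

/-- Valid (layer, position) indices: `ℓ ≥ 2`, `0 ≤ j ≤ n_ℓ − 1`. -/
def validIdx (p : ℕ × ℕ) : Prop := 2 ≤ p.1 ∧ p.2 < nl p.1

/-- Lexicographic order on indices: `(ℓ',j')` comes before `(ℓ,j)`. -/
def lexBefore (p q : ℕ × ℕ) : Prop := p.1 < q.1 ∨ (p.1 = q.1 ∧ p.2 < q.2)

/-- `Q` is the allocation sequence `Q*`: on even layers `q_{ℓ,j} = (z_ℓ, z_{ℓ,j})`;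
on odd layers `q_{ℓ,j}` is a vector among `q_0 = (0,0)` and `{q_{ℓ',j'} : ℓ' < ℓ}`
maximizing `x_{ℓ,j}·q`. -/
def isQstar (Q : ℕ × ℕ → V2) : Prop :=
  (∀ p : ℕ × ℕ, validIdx p → Even p.1 → Q p = ![zl p.1, zlj p.1 p.2]) ∧
  (∀ p : ℕ × ℕ, validIdx p → ¬ Even p.1 →
    (Q p = 0 ∨ ∃ p', validIdx p' ∧ p'.1 < p.1 ∧ Q p = Q p') ∧
    (∀ p', validIdx p' → p'.1 < p.1 → dot (xstar p) (Q p') ≤ dot (xstar p) (Q p)) ∧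
    0 ≤ dot (xstar p) (Q p))

/-- `gap_{ℓ,j} := x_{ℓ,j}·q_{ℓ,j} − max_{q} x_{ℓ,j}·q`, the maximum over `q_0 = (0,0)`
and all `q_{ℓ',j'}` with `(ℓ',j')` lexicographically before `(ℓ,j)`. -/
def gapStar (Q : ℕ × ℕ → V2) (p : ℕ × ℕ) : ℝ :=
  dot (xstar p) (Q p) -
    sSup (insert (0 : ℝ)
      {y | ∃ p', validIdx p' ∧ lexBefore p' p ∧ y = dot (xstar p) (Q p')})

/-! ### Auxiliary lemmas -/

set_option maxHeartbeats 1000000 in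
lemma summable_aux : Summable (fun m : ℕ => if 2 ≤ m then 1 / (m * (Real.log m) ^ 2) else 0) := by
  rw [← summable_nat_add_iff 2]
  have heq : ∀ n : ℕ, (if 2 ≤ n + 2 then 1 / ((n + 2 : ℕ) * (Real.log (n + 2 : ℕ)) ^ 2) else 0)
      = 1 / (((n : ℝ) + 2) * (Real.log ((n : ℝ) + 2)) ^ 2) := by
    intro n; rw [if_pos (by omega)]; push_cast; ring_nf
  rw [show (fun n : ℕ => if 2 ≤ n + 2 then 1 / ((n + 2 : ℕ) * (Real.log (n + 2 : ℕ)) ^ 2) else 0)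
      = fun n : ℕ => 1 / (((n : ℝ) + 2) * (Real.log ((n : ℝ) + 2)) ^ 2) from funext heq]
  set f : ℕ → ℝ := fun n => 1 / (((n : ℝ) + 2) * (Real.log ((n : ℝ) + 2)) ^ 2) with hf
  have hmono : ∀ ⦃m n : ℕ⦄, 0 < m → m ≤ n → f n ≤ f m := by
    intro m n _ hmn
    have h0 : (0:ℝ) ≤ (m:ℝ) := Nat.cast_nonneg m
    have h2 : (2 : ℝ) ≤ (m : ℝ) + 2 := by linarith
    have hmn' : (m:ℝ) ≤ (n:ℝ) := Nat.cast_le.mpr hmn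
    have hle : (m : ℝ) + 2 ≤ (n : ℝ) + 2 := by linarith
    have hlm : 0 < Real.log ((m : ℝ) + 2) := Real.log_pos (by linarith)
    have hln : Real.log ((m : ℝ) + 2) ≤ Real.log ((n : ℝ) + 2) := Real.log_le_log (by linarith) hle
    apply one_div_le_one_div_of_le
    · positivity
    · have : Real.log ((m:ℝ)+2) ^ 2 ≤ Real.log ((n:ℝ)+2) ^ 2 := by nlinarith
      nlinarith
  rw [← summable_condensed_iff_of_nonneg (fun n => by positivity) hmono]
  rw [← summable_nat_add_iff 1]
  have hl2 : 0 < Real.log 2 := Real.log_pos one_lt_two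
  refine Summable.of_nonneg_of_le (fun n => by positivity) ?_
    (Summable.mul_left ((Real.log 2)⁻¹ ^ 2) ((summable_nat_add_iff 1).mpr
      (Real.summable_one_div_nat_pow.mpr one_lt_two)))
  intro n
  have hp : (0 : ℝ) < 2 ^ (n + 1) := by positivity
  have hcast : ((2 ^ (n + 1) : ℕ) : ℝ) = 2 ^ (n + 1) := by push_cast; ring
  have hlog : ((n : ℝ) + 1) * Real.log 2 ≤ Real.log (((2:ℝ) ^ (n + 1)) + 2) := by
    calc ((n : ℝ) + 1) * Real.log 2 = Real.log ((2:ℝ) ^ (n + 1)) := by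
          rw [Real.log_pow]; push_cast; ring
      _ ≤ _ := Real.log_le_log hp (by linarith)
  have hlpos : 0 < ((n : ℝ) + 1) * Real.log 2 := by positivity
  rw [hf]
  simp only [hcast]
  push_cast
  have h1 : (0:ℝ) < (((2:ℝ) ^ (n+1)) + 2) := by positivity
  have hlog2 : (0:ℝ) < Real.log (((2:ℝ) ^ (n + 1)) + 2) := lt_of_lt_of_le hlpos hlog
  have hsq : (((n : ℝ) + 1) * Real.log 2) ^ 2 ≤ (Real.log (((2:ℝ) ^ (n + 1)) + 2)) ^ 2 := by
    nlinarith
  calc (2:ℝ) ^ (n+1) * (1 / ((((2:ℝ) ^ (n+1)) + 2) * (Real.log (((2:ℝ) ^ (n + 1)) + 2)) ^ 2))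
      ≤ (2:ℝ) ^ (n+1) * (1 / ((((2:ℝ) ^ (n+1))) * (((n : ℝ) + 1) * Real.log 2) ^ 2)) := by
        apply mul_le_mul_of_nonneg_left _ (by positivity)
        apply one_div_le_one_div_of_le (by positivity)
        nlinarith
    _ = (Real.log 2)⁻¹ ^ 2 * (1 / ((n : ℝ) + 1) ^ 2) := by
        field_simp

lemma alpha_pos : 0 < α := by
  have h2 : (0:ℝ) < (if 2 ≤ (2:ℕ) then 1 / ((2:ℕ) * (Real.log (2:ℕ)) ^ 2) else 0) := by
    rw [if_pos le_rfl]
    have : (0:ℝ) < Real.log ((2:ℕ):ℝ) := Real.log_pos (by norm_num)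
    positivity
  refine lt_of_lt_of_le h2 (Summable.le_tsum summable_aux 2 (fun m _ => ?_))
  split
  · positivity
  · exact le_rfl

lemma delta_nonneg (l : ℕ) : 0 ≤ δ l := by
  unfold δ
  have := alpha_pos.le
  positivity

lemma delta_pos {l : ℕ} (hl : 2 ≤ l) : 0 < δ l := by
  unfold δ
  have h2 : (2:ℝ) ≤ (l:ℝ) := by exact_mod_cast hl
  have hlog : 0 < Real.log l := Real.log_pos (by linarith)
  have := alpha_pos
  positivity

lemma delta_le_zl {l : ℕ} (hl : 2 ≤ l) : δ l ≤ zl l := by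
  unfold zl
  have : δ l = ∑ m ∈ {l}, δ m := by simp
  rw [this]
  exact Finset.sum_le_sum_of_subset_of_nonneg
    (by simp [Finset.singleton_subset_iff]; omega) (fun i _ _ => delta_nonneg i)

lemma zl_add_delta_le {m l : ℕ} (hm : 2 ≤ m) (hml : m < l) : zl m + δ l ≤ zl l := by
  have hnotmem : l ∉ Finset.Icc 2 m := by simp; omega
  have : zl m + δ l = ∑ i ∈ insert l (Finset.Icc 2 m), δ i := by
    rw [Finset.sum_insert hnotmem]; unfold zl; ring
  rw [this]
  unfold zl
  exact Finset.sum_le_sum_of_subset_of_nonneg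
    (by intro i hi; simp at hi ⊢; omega) (fun i _ _ => delta_nonneg i)

lemma nl_ge {l : ℕ} (hl : 2 ≤ l) : l + 1 ≤ nl l := by
  unfold nl
  have h2 : (2:ℝ) ≤ (l:ℝ) := by exact_mod_cast hl
  have hlog : 0 < Real.log l := Real.log_pos (by linarith)
  have : 1 ≤ ⌈(Real.log l) ^ 2⌉₊ := by
    rw [Nat.one_le_ceil_iff]; positivity
  nlinarith [this, hl]

lemma theta_pos {l : ℕ} (hl : 2 ≤ l) : 0 < θ l := by
  unfold θ
  have h3 : 3 ≤ nl l := by have := nl_ge hl; omega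
  have : (3:ℝ) ≤ (nl l : ℝ) := by exact_mod_cast h3
  have := Real.pi_pos
  apply div_pos this
  linarith

lemma nl_mul_theta {l : ℕ} (hl : 2 ≤ l) : ((nl l : ℝ) - 1) * θ l = Real.pi / 2 := by
  unfold θ
  have h3 : 3 ≤ nl l := by have := nl_ge hl; omega
  have h3' : (3:ℝ) ≤ (nl l : ℝ) := by exact_mod_cast h3
  have hne : ((nl l : ℝ) - 1) ≠ 0 := by linarith
  field_simp

/-- `z_{m,k} ≤ 1` for valid indices. -/
lemma zlj_le_one {m k : ℕ} (hm : 2 ≤ m) (hk : k < nl m) : zlj m k ≤ 1 := by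
  unfold zlj
  split
  · exact le_rfl
  · rename_i hne
    have hθ := theta_pos hm
    have hk1 : (k:ℝ) + 1 ≤ (nl m : ℝ) - 1 := by
      have : k + 2 ≤ nl m := by omega
      have := (Nat.cast_le (α := ℝ)).mpr this
      push_cast at this ⊢; linarith
    have hang : ((k:ℝ) + 1) * θ m ≤ Real.pi / 2 := by
      rw [← nl_mul_theta hm]
      apply mul_le_mul_of_nonneg_right hk1 hθ.le
    have hangpos : 0 < ((k:ℝ) + 1) * θ m := by positivity
    have hsin : 0 < Real.sin (((k:ℝ) + 1) * θ m) := by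
      apply Real.sin_pos_of_pos_of_lt_pi hangpos
      linarith [Real.pi_pos]
    have hcos : 0 ≤ Real.cos (((k:ℝ) + 1) * θ m) := by
      apply Real.cos_nonneg_of_mem_Icc
      constructor <;> [linarith [Real.pi_pos]; linarith]
    have hcot : 0 ≤ cot (((k:ℝ) + 1) * θ m) := div_nonneg hcos hsin.le
    nlinarith [delta_nonneg m]

lemma dot_eval (x : V2) (a b : ℝ) : dot x ![a, b] = x 0 * a + x 1 * b := by
  simp [dot, Fin.sum_univ_two]

/-- Structure of the allocation values: each is `0` or an even-layer value. -/
lemma Q_shape {Q : ℕ × ℕ → V2} (hQ : isQstar Q) :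
    ∀ p : ℕ × ℕ, validIdx p → Q p = 0 ∨
      ∃ m k, 2 ≤ m ∧ Even m ∧ k < nl m ∧ m ≤ p.1 ∧ Q p = ![zl m, zlj m k] := by
  intro p
  obtain ⟨l0, j0⟩ := p
  induction l0 using Nat.strong_induction_on generalizing j0 with
  | _ l0 ih =>
    intro hp
    by_cases he : Even l0
    · exact Or.inr ⟨l0, j0, hp.1, he, hp.2, le_rfl, hQ.1 _ hp he⟩
    · obtain ⟨h1, -, -⟩ := hQ.2 _ hp he
      rcases h1 with h | ⟨p', hp', hlt, heq⟩
      · exact Or.inl h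
      · rcases ih p'.1 hlt p'.2 (by simpa using hp') with h0 | ⟨m, k, hm, hme, hk, hmle, hQeq⟩
        · exact Or.inl (heq.trans h0)
        · exact Or.inr ⟨m, k, hm, hme, hk, le_trans hmle (Nat.le_of_lt hlt), heq.trans hQeq⟩


set_option maxHeartbeats 1000000 in
/-- Core gap lower bound for non-final positions of an even layer. -/
lemma gap_lower {Q : ℕ × ℕ → V2} (hQ : isQstar Q) {l : ℕ} (hl : 2 < l) (hle : Even l)
    {j : ℕ} (hj : j + 2 ≤ nl l) :
    δ l * Real.sin (θ l) / Real.sin (((j : ℝ) + 1) * θ l) ≤ gapStar Q (l, j) := by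
  have hl2 : 2 ≤ l := hl.le
  have hθ := theta_pos hl2
  have hπ := Real.pi_pos
  set c := Real.cos ((j : ℝ) * θ l) with hcdef
  set s := Real.sin ((j : ℝ) * θ l) with hsdef
  set S1 := Real.sin (((j : ℝ) + 1) * θ l) with hS1def
  set C1 := Real.cos (((j : ℝ) + 1) * θ l) with hC1def
  have hN : ((j : ℝ) + 1) ≤ (nl l : ℝ) - 1 := by
    have : (j : ℝ) + 2 ≤ (nl l : ℝ) := by exact_mod_cast Nat.cast_le.mpr hj
    linarith
  have hang1 : ((j : ℝ) + 1) * θ l ≤ Real.pi / 2 := by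
    rw [← nl_mul_theta hl2]; exact mul_le_mul_of_nonneg_right hN hθ.le
  have hangj : 0 ≤ (j : ℝ) * θ l := by positivity
  have hangj' : (j : ℝ) * θ l ≤ Real.pi / 2 := by
    have : (j : ℝ) * θ l ≤ ((j : ℝ) + 1) * θ l :=
      mul_le_mul_of_nonneg_right (by linarith) hθ.le
    linarith
  have hS1 : 0 < S1 := by
    apply Real.sin_pos_of_pos_of_lt_pi (by positivity); linarith
  have hC1 : 0 ≤ C1 := Real.cos_nonneg_of_mem_Icc ⟨by linarith, hang1⟩
  have hc : 0 ≤ c := Real.cos_nonneg_of_mem_Icc ⟨by linarith, hangj'⟩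
  have hs : 0 ≤ s := Real.sin_nonneg_of_nonneg_of_le_pi hangj (by linarith)
  set t := C1 / S1 with htdef
  have hsinθ : Real.sin (θ l) = S1 * c - C1 * s := by
    have harg : ((j : ℝ) + 1) * θ l - (j : ℝ) * θ l = θ l := by ring
    rw [← harg, Real.sin_sub]
  have hdiv : Real.sin (θ l) / S1 = c - t * s := by
    rw [hsinθ, htdef]; field_simp
  have hB : δ l * Real.sin (θ l) / S1 = δ l * (c - t * s) := by
    rw [mul_div_assoc, hdiv]
  have hvlj : validIdx (l, j) := ⟨hl2, show j < nl l by omega⟩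
  have hQlj : Q (l, j) = ![zl l, zlj l j] := hQ.1 (l, j) hvlj hle
  have hzlj : zlj l j = 1 - δ l * t := by
    unfold zlj cot
    rw [if_neg (by omega)]
  have hxs : xstar (l, j) = ![c, s] := by
    unfold xstar; rw [if_pos hle]
  have hdot : dot (xstar (l, j)) (Q (l, j)) = c * zl l + s * (1 - δ l * t) := by
    rw [hQlj, hxs, dot_eval, hzlj]; simp
  have hδ := delta_nonneg l
  have hδzl := delta_le_zl hl2
  -- the key claim: every competing value is at most `dot - B`
  have hkey : ∀ y ∈ insert (0 : ℝ)
      {y | ∃ p', validIdx p' ∧ lexBefore p' (l, j) ∧ y = dot (xstar (l, j)) (Q p')},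
      y ≤ dot (xstar (l, j)) (Q (l, j)) - δ l * (c - t * s) := by
    have h0 : (0 : ℝ) ≤ dot (xstar (l, j)) (Q (l, j)) - δ l * (c - t * s) := by
      rw [hdot]
      nlinarith [mul_nonneg hc (sub_nonneg.mpr hδzl)]
    intro y hy
    rcases hy with rfl | ⟨p', hval, hlex, rfl⟩
    · exact h0
    rcases hlex with hlt | ⟨heq, hjlt⟩
    · -- earlier layer
      rcases Q_shape hQ p' hval with hQ0 | ⟨m, k, hm, -, hk, hmle, hQeq⟩
      · rw [hQ0]
        simpa [dot] using h0
      · have hml : m < l := lt_of_le_of_lt hmle hlt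
        have h1 := zl_add_delta_le hm hml
        have h2 := zlj_le_one hm hk
        rw [hdot, hQeq, hxs, dot_eval]
        simp only [Matrix.cons_val_zero, Matrix.cons_val_one, Matrix.head_cons]
        nlinarith [mul_nonneg hc (by linarith : (0:ℝ) ≤ zl l - zl m - δ l),
          mul_nonneg hs (by linarith : (0:ℝ) ≤ 1 - zlj m k)]
    · -- same layer, earlier position
      have hple : Even p'.1 := by rw [heq]; exact hle
      have hQp' : Q p' = ![zl p'.1, zlj p'.1 p'.2] := hQ.1 p' hval hple
      set k := p'.2 with hkdef
      set u := ((k : ℝ) + 1) * θ l with hudef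
      have hkj : k < j := hjlt
      have hzk : zlj l k = 1 - δ l * cot u := by
        unfold zlj cot
        rw [if_neg (by omega)]
      have hu0 : 0 < u := by positivity
      have huj : u ≤ (j : ℝ) * θ l := by
        have h1 : (k : ℝ) + 1 ≤ (j : ℝ) := by exact_mod_cast hkj
        exact mul_le_mul_of_nonneg_right h1 hθ.le
      have hsinu : 0 < Real.sin u :=
        Real.sin_pos_of_pos_of_lt_pi hu0 (by linarith)
      have hcosu : 0 ≤ Real.cos u :=
        Real.cos_nonneg_of_mem_Icc ⟨by linarith, by linarith⟩
      have hdiff : 0 ≤ s * Real.cos u - c * Real.sin u := by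
        have : s * Real.cos u - c * Real.sin u = Real.sin ((j : ℝ) * θ l - u) := by
          rw [Real.sin_sub]
        rw [this]
        apply Real.sin_nonneg_of_nonneg_of_le_pi (by linarith) (by linarith)
      have hcotle : δ l * c ≤ δ l * (s * cot u) := by
        apply mul_le_mul_of_nonneg_left _ hδ
        unfold cot
        rw [mul_div_assoc', le_div_iff₀ hsinu]
        linarith
      rw [heq] at hQp'
      rw [hdot, hQp', hxs, dot_eval]
      simp only [Matrix.cons_val_zero, Matrix.cons_val_one, Matrix.head_cons]
      rw [hzk]
      nlinarith [hcotle]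
  -- conclude via the supremum bound
  have hsup : sSup (insert (0 : ℝ)
      {y | ∃ p', validIdx p' ∧ lexBefore p' (l, j) ∧ y = dot (xstar (l, j)) (Q p')})
      ≤ dot (xstar (l, j)) (Q (l, j)) - δ l * (c - t * s) :=
    Real.sSup_le hkey (hkey 0 (Set.mem_insert 0 _))
  unfold gapStar
  rw [hB]
  linarith

set_option maxHeartbeats 1000000 in
/-- The gap at the final position of an even layer is nonnegative. -/
lemma gap_last {Q : ℕ × ℕ → V2} (hQ : isQstar Q) {l : ℕ} (hl : 2 < l) (hle : Even l) :
    0 ≤ gapStar Q (l, nl l - 1) := by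
  have hl2 : 2 ≤ l := hl.le
  have hn := nl_ge hl2
  set j := nl l - 1 with hjdef
  have hang : (j : ℝ) * θ l = Real.pi / 2 := by
    have hcast : (j : ℝ) = (nl l : ℝ) - 1 := by
      rw [hjdef]; push_cast [Nat.cast_sub (by omega : 1 ≤ nl l)]; ring
    rw [hcast, nl_mul_theta hl2]
  have hvlj : validIdx (l, j) := ⟨hl2, show j < nl l by omega⟩
  have hQlj : Q (l, j) = ![zl l, zlj l j] := hQ.1 (l, j) hvlj hle
  have hxs : xstar (l, j) = ![(0 : ℝ), 1] := by
    unfold xstar; rw [if_pos hle]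
    simp only [hang]
    rw [Real.cos_pi_div_two, Real.sin_pi_div_two]
  have hzlj : zlj l j = 1 := by unfold zlj; rw [if_pos rfl]
  have hdot : dot (xstar (l, j)) (Q (l, j)) = 1 := by
    rw [hQlj, hxs, dot_eval, hzlj]; simp
  have hkey : ∀ y ∈ insert (0 : ℝ)
      {y | ∃ p', validIdx p' ∧ lexBefore p' (l, j) ∧ y = dot (xstar (l, j)) (Q p')},
      y ≤ 1 := by
    intro y hy
    rcases hy with rfl | ⟨p', hval, hlex, rfl⟩
    · norm_num
    have hshape : Q p' = 0 ∨ ∃ m k, 2 ≤ m ∧ k < nl m ∧ Q p' = ![zl m, zlj m k] := by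
      rcases hlex with hlt | ⟨heq, hjlt⟩
      · rcases Q_shape hQ p' hval with h | ⟨m, k, hm, -, hk, -, h⟩
        · exact Or.inl h
        · exact Or.inr ⟨m, k, hm, hk, h⟩
      · have hple : Even p'.1 := by rw [heq]; exact hle
        refine Or.inr ⟨p'.1, p'.2, ?_, hval.2, hQ.1 p' hval hple⟩
        rw [heq]; exact hl2
    rcases hshape with h | ⟨m, k, hm, hk, h⟩
    · rw [h]; simp [dot]
    · rw [h, hxs, dot_eval]
      simp only [Matrix.cons_val_zero, Matrix.cons_val_one, Matrix.head_cons]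
      have := zlj_le_one hm hk
      linarith
  have hsup : sSup (insert (0 : ℝ)
      {y | ∃ p', validIdx p' ∧ lexBefore p' (l, j) ∧ y = dot (xstar (l, j)) (Q p')})
      ≤ 1 := Real.sSup_le hkey zero_le_one
  unfold gapStar
  rw [hdot]
  linarith


theorem stmt15 (Q : ℕ × ℕ → V2) (hQ : isQstar Q) (l : ℕ)
    (hl : 2 < l) (hleven : Even l) :
    δ l * Real.log (nl l) / 2 ≤ ∑ j ∈ Finset.range (nl l), gapStar Q (l, j) := by
  have hl2 : 2 ≤ l := hl.le
  have hθ := theta_pos hl2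
  have hπ := Real.pi_pos
  have hnl : l + 1 ≤ nl l := nl_ge hl2
  have hn4 : 4 ≤ nl l := by omega
  have hδ := delta_nonneg l
  set n := nl l with hndef
  have h3 : (3 : ℝ) ≤ (n : ℝ) - 1 := by
    have : (4 : ℝ) ≤ (n : ℝ) := by exact_mod_cast hn4
    linarith
  have hθπ : θ l ≤ Real.pi / 2 := by
    unfold θ
    rw [div_le_div_iff₀ (by linarith : (0:ℝ) < 2 * ((nl l : ℝ) - 1)) two_pos]
    nlinarith
  have hsθpos : 0 < Real.sin (θ l) :=
    Real.sin_pos_of_pos_of_lt_pi hθ (by linarith)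
  have hsinθ : 2 / Real.pi * θ l ≤ Real.sin (θ l) := Real.mul_le_sin hθ.le hθπ
  have hterm : ∀ j ∈ Finset.range (n - 1),
      δ l * (2 / Real.pi) * (1 / ((j : ℝ) + 1)) ≤ gapStar Q (l, j) := by
    intro j hj
    rw [Finset.mem_range] at hj
    have hj2 : j + 2 ≤ nl l := by omega
    refine le_trans ?_ (gap_lower hQ hl hleven hj2)
    have hN : ((j : ℝ) + 1) ≤ (nl l : ℝ) - 1 := by
      have : ((j : ℝ) + 2) ≤ (nl l : ℝ) := by exact_mod_cast hj2
      linarith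
    have hang1 : ((j : ℝ) + 1) * θ l ≤ Real.pi / 2 := by
      rw [← nl_mul_theta hl2]; exact mul_le_mul_of_nonneg_right hN hθ.le
    have hang1' : 0 < ((j : ℝ) + 1) * θ l := by positivity
    have hS1 : 0 < Real.sin (((j : ℝ) + 1) * θ l) :=
      Real.sin_pos_of_pos_of_lt_pi hang1' (by linarith)
    have hS1le : Real.sin (((j : ℝ) + 1) * θ l) ≤ ((j : ℝ) + 1) * θ l :=
      Real.sin_le hang1'.le
    calc δ l * (2 / Real.pi) * (1 / ((j : ℝ) + 1))
        = (δ l * (2 / Real.pi * θ l)) / (((j : ℝ) + 1) * θ l) := by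
          field_simp
      _ ≤ δ l * Real.sin (θ l) / Real.sin (((j : ℝ) + 1) * θ l) :=
          div_le_div₀ (mul_nonneg hδ hsθpos.le)
            (mul_le_mul_of_nonneg_left hsinθ hδ) hS1 hS1le
  have hn1 : n = (n - 1) + 1 := by omega
  rw [hn1, Finset.sum_range_succ, show n - 1 + 1 = n from hn1.symm]
  have hlast : 0 ≤ gapStar Q (l, n - 1) := gap_last hQ hl hleven
  have hsum1 : ∑ j ∈ Finset.range (n - 1), δ l * (2 / Real.pi) * (1 / ((j : ℝ) + 1))
      ≤ ∑ j ∈ Finset.range (n - 1), gapStar Q (l, j) := Finset.sum_le_sum hterm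
  have hharm : Real.log (n : ℝ) ≤ ∑ j ∈ Finset.range (n - 1), (1 / ((j : ℝ) + 1)) := by
    have h := log_add_one_le_harmonic (n - 1)
    rw [show (n - 1) + 1 = n from by omega] at h
    refine le_trans h ?_
    rw [harmonic]
    push_cast
    apply le_of_eq
    refine Finset.sum_congr rfl fun i _ => ?_
    rw [one_div]
  have hfactor : ∑ j ∈ Finset.range (n - 1), δ l * (2 / Real.pi) * (1 / ((j : ℝ) + 1))
      = δ l * (2 / Real.pi) * ∑ j ∈ Finset.range (n - 1), (1 / ((j : ℝ) + 1)) :=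
    Finset.mul_sum _ _ _ |>.symm
  have hlog : 0 ≤ Real.log (n : ℝ) := Real.log_nonneg (by linarith)
  have hπ4 : Real.pi ≤ 4 := Real.pi_le_four
  have hr : (1 : ℝ) / 2 ≤ 2 / Real.pi := by
    rw [div_le_div_iff₀ two_pos hπ]; linarith
  have hmain : δ l * Real.log (n : ℝ) / 2 ≤ δ l * (2 / Real.pi) * Real.log (n : ℝ) := by
    nlinarith [mul_le_mul_of_nonneg_left hr (mul_nonneg hδ hlog)]
  have hmain2 : δ l * (2 / Real.pi) * Real.log (n : ℝ)
      ≤ δ l * (2 / Real.pi) * ∑ j ∈ Finset.range (n - 1), (1 / ((j : ℝ) + 1)) :=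
    mul_le_mul_of_nonneg_left hharm (by positivity)
  linarith [hfactor ▸ hmain2, hsum1]


end Stmt15
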